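/- A word w over the nonnegative integers is pop stack sortable if and only if w avoids the patterns 120, 201, and 1010. -/

import Mathlib

def Contains120 (w : List ℕ) : Prop :=
  ∃ i j k, i < j ∧ j < k ∧ k < w.length ∧ w.getD k 0 < w.getD i 0 ∧ w.getD i 0 < w.getD j 0

def Contains201 (w : List ℕ) : Prop :=
  ∃ i j k, i < j ∧ j < k ∧ k < w.length ∧ w.getD j 0 < w.getD k 0 ∧ w.getD k 0 < w.getD i 0

def Contains210 (w : List ℕ) : Prop :=
  ∃ i j k, i < j ∧ j < k ∧ k < w.length ∧ w.getD k 0 < w.getD j 0 ∧ w.getD j 0 < w.getD i 0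

def Contains1010 (w : List ℕ) : Prop :=
  ∃ i j k l, i < j ∧ j < k ∧ k < l ∧ l < w.length ∧
    w.getD j 0 = w.getD l 0 ∧ w.getD l 0 < w.getD i 0 ∧ w.getD i 0 = w.getD k 0

/-- The greedy pop stack sorting algorithm: push the next input letter whenever the pop
stack is empty or the letter is at most the top; otherwise pop the entire stack to the
output; at the end pop all remaining entries. -/
def popStackSortAux : List ℕ → List ℕ → List ℕ → List ℕ
  | [], st, out => out ++ st
  | x :: xs, [], out => popStackSortAux xs [x] out
  | x :: xs, t :: st, out =>
    if x ≤ t then popStackSortAux xs (x :: t :: st) out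
    else popStackSortAux xs [x] (out ++ t :: st)
termination_by input _ _ => input.length

def popStackSort (w : List ℕ) : List ℕ := popStackSortAux w [] []


def runSplit : ℕ → List ℕ → List ℕ × List ℕ
  | _, [] => ([], [])
  | t, x :: xs =>
    if x ≤ t then
      let p := runSplit x xs
      (x :: p.1, p.2)
    else ([], x :: xs)

theorem runSplit_append : ∀ (xs : List ℕ) (t : ℕ),
    (runSplit t xs).1 ++ (runSplit t xs).2 = xs
  | [], t => rfl
  | x :: xs, t => by
    by_cases h : x ≤ t <;> simp [runSplit, h, runSplit_append xs x]

theorem runSplit_chain : ∀ (xs : List ℕ) (t : ℕ),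
    List.Chain (fun a b => b ≤ a) t (runSplit t xs).1
  | [], t => List.Chain.nil
  | x :: xs, t => by
    by_cases h : x ≤ t
    · simpa [runSplit, h] using @List.Chain.cons ℕ (fun a b => b ≤ a) x _ t h (runSplit_chain xs x)
    · simp [runSplit, h]
      exact List.Chain.nil

theorem runSplit_boundary : ∀ (xs : List ℕ) (t y : ℕ) (ys : List ℕ),
    (runSplit t xs).2 = y :: ys → (t :: (runSplit t xs).1).getLast (by simp) < y
  | [], t, y, ys => by simp [runSplit]
  | x :: xs, t, y, ys => by
    by_cases h : x ≤ t
    · intro hrest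
      simp only [runSplit, if_pos h] at hrest ⊢
      have := runSplit_boundary xs x y ys hrest
      rwa [List.getLast_cons (by simp)]
    · intro hrest
      simp only [runSplit, if_neg h] at hrest ⊢
      cases hrest
      simpa using Nat.lt_of_not_le (by simpa using h)

theorem aux_out : ∀ (xs st out : List ℕ),
    popStackSortAux xs st out = out ++ popStackSortAux xs st []
  | [], st, out => by simp [popStackSortAux]
  | x :: xs, [], out => by
    simp only [popStackSortAux]
    exact aux_out xs [x] out
  | x :: xs, t :: st, out => by
    by_cases h : x ≤ t
    · simp only [popStackSortAux, if_pos h]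
      exact aux_out xs (x :: t :: st) out
    · simp only [popStackSortAux, if_neg h]
      rw [aux_out xs [x] (out ++ t :: st), aux_out xs [x] ([] ++ t :: st)]
      simp

theorem aux_run : ∀ (xs : List ℕ) (t : ℕ) (st : List ℕ),
    popStackSortAux xs (t :: st) [] =
      ((runSplit t xs).1.reverse ++ (t :: st)) ++ popStackSort (runSplit t xs).2
  | [], t, st => by simp [popStackSortAux, runSplit, popStackSort]
  | x :: xs, t, st => by
    by_cases h : x ≤ t
    · simp only [popStackSortAux, if_pos h, runSplit]
      rw [aux_run xs x (t :: st)]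
      simp
    · simp only [popStackSortAux, if_neg h, runSplit]
      rw [aux_out xs [x] ([] ++ t :: st)]
      have hps : popStackSort (x :: xs) = popStackSortAux xs [x] [] := by
        show popStackSortAux (x :: xs) [] [] = _
        simp only [popStackSortAux]
      rw [hps]
      simp

theorem popStackSort_cons (x : ℕ) (xs : List ℕ) :
    popStackSort (x :: xs) =
      ((x :: (runSplit x xs).1).reverse) ++ popStackSort (runSplit x xs).2 := by
  simp only [popStackSort, popStackSortAux]
  rw [aux_run xs x []]
  show _ = _ ++ popStackSort _
  simp

theorem aux_perm : ∀ (xs st out : List ℕ),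
    (popStackSortAux xs st out).Perm (out ++ st ++ xs)
  | [], st, out => by simp [popStackSortAux]
  | x :: xs, [], out => by
    simp only [popStackSortAux]
    simpa using aux_perm xs [x] out
  | x :: xs, t :: st, out => by
    by_cases h : x ≤ t
    · simp only [popStackSortAux, if_pos h]
      refine (aux_perm xs (x :: t :: st) out).trans ?_
      simp only [List.append_assoc]
      exact List.Perm.append_left out (by simpa using (List.perm_middle (a := x) (l₁ := t :: st) (l₂ := xs)).symm)
    · simp only [popStackSortAux, if_neg h]
      refine (aux_perm xs [x] (out ++ t :: st)).trans ?_
      simp only [List.append_assoc]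
      exact List.Perm.append_left out (List.Perm.append_left (t :: st) (by simp))

theorem popStackSort_perm (w : List ℕ) : (popStackSort w).Perm w := by
  simpa [popStackSort] using aux_perm w [] []

theorem key_pattern (w : List ℕ) (a b c d : ℕ) (hab : a ≤ b) (hbc : b < c) (hcd : c ≤ d)
    (hd : d < w.length) (h1 : w.getD b 0 < w.getD c 0) (h2 : w.getD d 0 < w.getD a 0) :
    Contains120 w ∨ Contains201 w ∨ Contains1010 w := by
  rcases lt_trichotomy (w.getD a 0) (w.getD c 0) with hac | hac | hac
  · -- w_a < w_c : 120 at (a, c, d)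
    have hcd' : c < d := lt_of_le_of_ne hcd (by rintro rfl; omega)
    exact Or.inl ⟨a, c, d, by omega, hcd', hd, h2, hac⟩
  · -- w_a = w_c
    rcases lt_trichotomy (w.getD b 0) (w.getD d 0) with hbd | hbd | hbd
    · -- 201 at (a, b, d)
      have hab' : a < b := lt_of_le_of_ne hab (by rintro rfl; omega)
      exact Or.inr (Or.inl ⟨a, b, d, hab', by omega, hd, hbd, h2⟩)
    · -- 1010 at (a, b, c, d)
      have hab' : a < b := lt_of_le_of_ne hab (by rintro rfl; omega)
      have hcd' : c < d := lt_of_le_of_ne hcd (by rintro rfl; omega)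
      exact Or.inr (Or.inr ⟨a, b, c, d, hab', hbc, hcd', hd, by omega, by omega, by omega⟩)
    · -- 120 at (b, c, d)
      have hcd' : c < d := lt_of_le_of_ne hcd (by rintro rfl; omega)
      exact Or.inl ⟨b, c, d, hbc, hcd', hd, hbd, by omega⟩
  · -- w_c < w_a : 201 at (a, b, c)
    have hab' : a < b := lt_of_le_of_ne hab (by rintro rfl; omega)
    exact Or.inr (Or.inl ⟨a, b, c, hab', hbc, lt_of_le_of_lt hcd hd, h1, hac⟩)

theorem avoid_run_iff (x : ℕ) (r rest : List ℕ)
    (hpw : List.Pairwise (fun a b => b ≤ a) (x :: r))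
    (hasc : ∀ y ys, rest = y :: ys → (x :: r).getLast (by simp) < y) :
    (¬ Contains120 (x :: (r ++ rest)) ∧ ¬ Contains201 (x :: (r ++ rest)) ∧
        ¬ Contains1010 (x :: (r ++ rest))) ↔
      ((∀ b ∈ rest, x ≤ b) ∧
        (¬ Contains120 rest ∧ ¬ Contains201 rest ∧ ¬ Contains1010 rest)) := by
  set w : List ℕ := x :: (r ++ rest) with hw
  set m : ℕ := r.length with hm
  have hweq : w = (x :: r) ++ rest := rfl
  have hlen : w.length = m + 1 + rest.length := by simp [hweq]; omega
  have hpre : ∀ p, p ≤ m → w.getD p 0 = (x :: r).getD p 0 := by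
    intro p hp
    rw [hweq, List.getD_append _ _ _ _ (by simp; omega)]
  have hsuf : ∀ n, w.getD (m + 1 + n) 0 = rest.getD n 0 := by
    intro n
    rw [hweq, List.getD_append_right _ _ _ _ (by simp [hm])]
    congr 1
    simp [hm]
  have hget : ∀ p (hp : p ≤ m), w.getD p 0 = (x :: r).get ⟨p, by simp; omega⟩ := by
    intro p hp
    rw [hpre p hp, List.getD_eq_getElem _ _ (by simp; omega)]
    rfl
  have hdec : ∀ p q, p ≤ q → q ≤ m → w.getD q 0 ≤ w.getD p 0 := by
    intro p q hpq hq
    rcases eq_or_lt_of_le hpq with rfl | hpq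
    · exact le_refl _
    · rw [hget p (le_trans (le_of_lt hpq) hq), hget q hq]
      exact List.pairwise_iff_get.1 hpw ⟨p, by simp; omega⟩ ⟨q, by simp; omega⟩ hpq
  have hx0 : w.getD 0 0 = x := rfl
  have hle : ∀ p, p ≤ m → w.getD p 0 ≤ x := by
    intro p hp
    have := hdec 0 p (Nat.zero_le p) hp
    omega
  have hasc' : rest ≠ [] → w.getD m 0 < w.getD (m + 1) 0 := by
    intro hne
    obtain ⟨y, ys, rfl⟩ := List.exists_cons_of_ne_nil hne
    have h1 : w.getD m 0 = (x :: r).getLast (by simp) := by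
      rw [hpre m le_rfl, List.getLast_eq_getElem,
        List.getD_eq_getElem _ _ (by simp [hm])]
      congr 1
    have h2 : w.getD (m + 1) 0 = y := by
      have := hsuf 0
      simpa using this
    rw [h1, h2]
    exact hasc y ys rfl
  constructor
  · rintro ⟨h120, h201, h1010⟩
    have hxb : ∀ b ∈ rest, x ≤ b := by
      intro b hb
      by_contra hbx
      push_neg at hbx
      obtain ⟨n, hn, rfl⟩ := List.mem_iff_getElem.1 hb
      have hbd : w.getD (m + 1 + n) 0 = rest[n] := by
        rw [hsuf n, List.getD_eq_getElem _ _ hn]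
      have hne : rest ≠ [] := by rintro rfl; simp at hn
      have := key_pattern w 0 m (m + 1) (m + 1 + n) (Nat.zero_le m) (by omega)
        (by omega) (by omega) (hasc' hne) (by rw [hbd, hx0]; exact hbx)
      tauto
    refine ⟨hxb, ?_, ?_, ?_⟩
    · rintro ⟨i, j, k, hij, hjk, hk, p1, p2⟩
      exact h120 ⟨m + 1 + i, m + 1 + j, m + 1 + k, by omega, by omega, by omega,
        by rw [hsuf i, hsuf k]; exact p1, by rw [hsuf i, hsuf j]; exact p2⟩
    · rintro ⟨i, j, k, hij, hjk, hk, p1, p2⟩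
      exact h201 ⟨m + 1 + i, m + 1 + j, m + 1 + k, by omega, by omega, by omega,
        by rw [hsuf j, hsuf k]; exact p1, by rw [hsuf i, hsuf k]; exact p2⟩
    · rintro ⟨i, j, k, l, hij, hjk, hkl, hl, p1, p2, p3⟩
      exact h1010 ⟨m + 1 + i, m + 1 + j, m + 1 + k, m + 1 + l, by omega, by omega,
        by omega, by omega,
        by rw [hsuf j, hsuf l]; exact p1, by rw [hsuf i, hsuf l]; exact p2,
        by rw [hsuf i, hsuf k]; exact p3⟩
  · rintro ⟨hxb, h120, h201, h1010⟩
    have hge : ∀ q, m + 1 ≤ q → q < w.length → x ≤ w.getD q 0 := by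
      intro q hq hql
      have hn : q - (m + 1) < rest.length := by omega
      have : w.getD q 0 = rest[q - (m + 1)] := by
        have := hsuf (q - (m + 1))
        rw [show m + 1 + (q - (m + 1)) = q by omega] at this
        rw [this, List.getD_eq_getElem _ _ hn]
      rw [this]
      exact hxb _ (List.getElem_mem hn)
    have hshift : ∀ i, m + 1 ≤ i → w.getD i 0 = rest.getD (i - (m + 1)) 0 := by
      intro i hi
      have := hsuf (i - (m + 1))
      rwa [show m + 1 + (i - (m + 1)) = i by omega] at this
    refine ⟨?_, ?_, ?_⟩
    · rintro ⟨i, j, k, hij, hjk, hk, p1, p2⟩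
      -- w_k < w_i < w_j
      have hi : m + 1 ≤ i := by
        by_contra hi
        push_neg at hi
        rcases Nat.lt_or_ge j (m + 1) with hj | hj
        · have := hdec i j (by omega) (by omega)
          omega
        · have hkm : m + 1 ≤ k := by omega
          have := hge k hkm hk
          have := hle i (by omega)
          omega
      exact h120 ⟨i - (m + 1), j - (m + 1), k - (m + 1), by omega, by omega, by omega,
        by rw [← hshift i hi, ← hshift k (by omega)]; exact p1,
        by rw [← hshift i hi, ← hshift j (by omega)]; exact p2⟩
    · rintro ⟨i, j, k, hij, hjk, hk, p1, p2⟩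
      -- w_j < w_k < w_i
      have hi : m + 1 ≤ i := by
        by_contra hi
        push_neg at hi
        rcases Nat.lt_or_ge k (m + 1) with hkm | hkm
        · have := hdec j k (by omega) (by omega)
          omega
        · have := hge k hkm hk
          have := hle i (by omega)
          omega
      exact h201 ⟨i - (m + 1), j - (m + 1), k - (m + 1), by omega, by omega, by omega,
        by rw [← hshift j (by omega), ← hshift k (by omega)]; exact p1,
        by rw [← hshift i hi, ← hshift k (by omega)]; exact p2⟩
    · rintro ⟨i, j, k, l, hij, hjk, hkl, hl, p1, p2, p3⟩
      -- w_j = w_l < w_i = w_k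
      have hi : m + 1 ≤ i := by
        by_contra hi
        push_neg at hi
        rcases Nat.lt_or_ge j (m + 1) with hj | hj
        · rcases Nat.lt_or_ge k (m + 1) with hkm | hkm
          · have := hdec j k (by omega) (by omega)
            omega
          · have h1 := hge k hkm (by omega)
            have h2 := hle i (by omega)
            have h3 := hge l (by omega) hl
            omega
        · have := hge j hj (by omega)
          have := hle i (by omega)
          omega
      exact h1010 ⟨i - (m + 1), j - (m + 1), k - (m + 1), l - (m + 1), by omega, by omega,
        by omega, by omega,
        by rw [← hshift j (by omega), ← hshift l (by omega)]; exact p1,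
        by rw [← hshift i hi, ← hshift l (by omega)]; exact p2,
        by rw [← hshift i hi, ← hshift k (by omega)]; exact p3⟩


theorem pop_stack_sortable_iff_aux : ∀ n (w : List ℕ), w.length ≤ n →
    (List.Pairwise (· ≤ ·) (popStackSort w) ↔
      ¬ Contains120 w ∧ ¬ Contains201 w ∧ ¬ Contains1010 w) := by
  intro n
  induction n with
  | zero =>
    intro w hw
    have : w = [] := List.eq_nil_of_length_eq_zero (by omega)
    subst this
    refine ⟨fun _ => ⟨?_, ?_, ?_⟩, fun _ => by simp [popStackSort, popStackSortAux]⟩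
    · rintro ⟨i, j, k, _, _, hk, -⟩; simp at hk
    · rintro ⟨i, j, k, _, _, hk, -⟩; simp at hk
    · rintro ⟨i, j, k, l, _, _, _, hl, -⟩; simp at hl
  | succ n ih =>
    intro w hw
    match w with
    | [] =>
      refine ⟨fun _ => ⟨?_, ?_, ?_⟩, fun _ => by simp [popStackSort, popStackSortAux]⟩
      · rintro ⟨i, j, k, _, _, hk, -⟩; simp at hk
      · rintro ⟨i, j, k, _, _, hk, -⟩; simp at hk
      · rintro ⟨i, j, k, l, _, _, _, hl, -⟩; simp at hl
    | x :: xs =>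
      have hxr : (runSplit x xs).1 ++ (runSplit x xs).2 = xs := runSplit_append xs x
      set r : List ℕ := (runSplit x xs).1 with hr
      set rest : List ℕ := (runSplit x xs).2 with hrest
      have hpw : List.Pairwise (fun a b => b ≤ a) (x :: r) :=
        List.isChain_iff_pairwise.1 (runSplit_chain xs x)
      have hasc : ∀ y ys, rest = y :: ys → (x :: r).getLast (by simp) < y :=
        fun y ys h => runSplit_boundary xs x y ys h
      have hrl : rest.length ≤ n := by
        have h1 : rest.length ≤ xs.length := by
          rw [← hxr]; simp
        simp only [List.length_cons] at hw
        omega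
      have IH := ih rest hrl
      have hsorted_iff : List.Pairwise (· ≤ ·) ((x :: r).reverse ++ popStackSort rest) ↔
          ((∀ b ∈ rest, x ≤ b) ∧ List.Pairwise (· ≤ ·) (popStackSort rest)) := by
        rw [List.pairwise_append]
        constructor
        · rintro ⟨h1, h2, h3⟩
          refine ⟨fun b hb => h3 x (by simp) b ?_, h2⟩
          exact ((popStackSort_perm rest).symm.subset) hb
        · rintro ⟨hxb, h2⟩
          refine ⟨?_, h2, ?_⟩
          · rw [List.pairwise_reverse]
            exact hpw
          · intro a ha b hb
            have ha' : a ∈ x :: r := List.mem_reverse.1 ha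
            have hax : a ≤ x := by
              rcases List.mem_cons.1 ha' with rfl | ha''
              · exact le_rfl
              · exact List.rel_of_pairwise_cons hpw ha''
            have hbx : x ≤ b := hxb b ((popStackSort_perm rest).subset hb)
            omega
      rw [popStackSort_cons, ← hr, ← hrest, hsorted_iff, IH,
        show x :: xs = x :: (r ++ rest) by rw [hxr], ← avoid_run_iff x r rest hpw hasc]

/-- A word is pop stack sortable iff it avoids the patterns 120, 201 and 1010. -/
theorem pop_stack_sortable_iff (w : List ℕ) :
    List.Pairwise (· ≤ ·) (popStackSort w) ↔
      ¬ Contains120 w ∧ ¬ Contains201 w ∧ ¬ Contains1010 w :=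
  pop_stack_sortable_iff_aux w.length w le_rfl
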